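/- The inequality (∫_0^∞ (∫_0^t f(s)^r v(s) ds)^{q/r} u(t) dt)^{1/q} ≤ C (∫_0^∞ (∫_t^∞ f(s) ds)^p w(t) dt)^{1/p} for all non-negative measurable f on (0,∞), with weights u, v, w and exponents 0 < p, q < ∞, can only hold with finite C for nontrivial weights when r ≤ 1; more precisely, if r > 1 then the validity of this inequality for all f ∈ M⁺ forces v = 0 a.e. (assuming u is not a.e. zero on any neighborhood of ∞ and w is locally integrable with ∫_0^∞ w > 0). -/

import Mathlib

open MeasureTheory Set
open scoped ENNReal

/-- Triviality of the Copson-to-Hardy inequality for `r > 1`: if `r > 1`,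
`u` is not a.e. zero on any neighbourhood of `∞`, `w` is locally integrable with
`∫_0^∞ w > 0`, and the inequality
`(∫_0^∞ (∫_0^t f^r v)^{q/r} u dt)^{1/q} ≤ C (∫_0^∞ (∫_t^∞ f)^p w dt)^{1/p}`
holds with a finite constant `C` for all non-negative measurable `f`,
then `v = 0` a.e. on `(0,∞)`. -/
theorem stmt16 (r p q : ℝ) (hr : 1 < r) (hp : 0 < p) (hq : 0 < q)
    (u v w : ℝ → ℝ≥0∞) (hu : Measurable u) (hv : Measurable v) (hw : Measurable w)
    (hufin : ∀ᵐ t ∂(volume.restrict (Ioi (0:ℝ))), u t ≠ ⊤)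
    (hvfin : ∀ᵐ t ∂(volume.restrict (Ioi (0:ℝ))), v t ≠ ⊤)
    (huo : ∀ T : ℝ, 0 < T → 0 < ∫⁻ t in Ioi T, u t)
    (hwloc : ∀ T : ℝ, 0 < T → (∫⁻ t in Ioo (0:ℝ) T, w t) ≠ ⊤)
    (hwpos : 0 < ∫⁻ t in Ioi (0:ℝ), w t)
    (C : ℝ≥0∞) (hC : C ≠ ⊤)
    (hineq : ∀ f : ℝ → ℝ≥0∞, Measurable f →
      (∫⁻ t in Ioi (0:ℝ), (∫⁻ s in Ioo (0:ℝ) t, f s ^ r * v s) ^ (q / r) * u t) ^ (1 / q)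
        ≤ C * (∫⁻ t in Ioi (0:ℝ), (∫⁻ s in Ioi t, f s) ^ p * w t) ^ (1 / p)) :
    ∀ᵐ t ∂(volume.restrict (Ioi (0:ℝ))), v t = 0 := by
  by_contra hcon
  rw [ae_iff, Measure.restrict_apply' measurableSet_Ioi] at hcon
  have hr0 : (0:ℝ) < r := lt_trans one_pos hr
  -- find a level set of v with positive measure
  set F : ℕ → Set ℝ := fun k => Ioo (0:ℝ) (k+1) ∩ {t | ((k:ℝ≥0∞)+1)⁻¹ ≤ v t} with hF
  have hsub : {t | ¬ v t = 0} ∩ Ioi 0 ⊆ ⋃ k, F k := by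
    rintro t ⟨ht0, htpos⟩
    obtain ⟨n, hn⟩ := ENNReal.exists_inv_nat_lt ht0
    refine mem_iUnion.2 ⟨max n ⌈t⌉₊, ⟨⟨htpos, ?_⟩, ?_⟩⟩
    · have h1 : t ≤ (⌈t⌉₊ : ℝ) := Nat.le_ceil t
      have h2 : ((⌈t⌉₊ : ℕ) : ℝ) ≤ ((max n ⌈t⌉₊ : ℕ) : ℝ) := by
        exact_mod_cast Nat.le_max_right n ⌈t⌉₊
      linarith
    · refine le_trans ?_ hn.le
      refine ENNReal.inv_le_inv' ?_
      calc (n : ℝ≥0∞) ≤ ((max n ⌈t⌉₊ : ℕ) : ℝ≥0∞) := by exact_mod_cast Nat.le_max_left n ⌈t⌉₊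
        _ ≤ ((max n ⌈t⌉₊ : ℕ) : ℝ≥0∞) + 1 := le_self_add
  obtain ⟨k, hE0⟩ : ∃ k, volume (F k) ≠ 0 := by
    by_contra h
    push_neg at h
    exact hcon (measure_mono_null hsub (measure_iUnion_null h))
  set b : ℝ := (k:ℝ) + 1 with hbdef
  set δ : ℝ≥0∞ := ((k:ℝ≥0∞)+1)⁻¹ with hδdef
  have hb : (0:ℝ) < b := by positivity
  set E := F k with hEdef
  have hE : MeasurableSet E := measurableSet_Ioo.inter (hv measurableSet_Ici)
  have hEsub : E ⊆ Ioo 0 b := inter_subset_left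
  have hEδ : ∀ t ∈ E, δ ≤ v t := fun t ht => ht.2
  have hδ0 : δ ≠ 0 := ENNReal.inv_ne_zero.2 (by simp)
  have hδtop : δ ≠ ⊤ := ENNReal.inv_ne_top.2 (by simp)
  -- constants
  set U : ℝ≥0∞ := ∫⁻ t in Ioi b, u t with hUdef
  have hU0 : U ≠ 0 := (huo b hb).ne'
  set U' : ℝ≥0∞ := min U 1 with hU'def
  have hU'0 : U' ≠ 0 := by
    simp only [hU'def, ne_eq, min_eq_iff]
    rintro (⟨h1, -⟩ | ⟨h1, -⟩)
    · exact hU0 h1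
    · exact one_ne_zero h1
  have hU'top : U' ≠ ⊤ := (lt_of_le_of_lt (min_le_right _ _) ENNReal.one_lt_top).ne
  set W : ℝ≥0∞ := ∫⁻ t in Ioo (0:ℝ) b, w t with hWdef
  have hWtop : W ≠ ⊤ := hwloc b hb
  set M : ℝ≥0∞ := C * W ^ (1/p) with hMdef
  have hMtop : M ≠ ⊤ :=
    ENNReal.mul_ne_top hC (ENNReal.rpow_ne_top_of_nonneg (by positivity) hWtop)
  set D : ℝ≥0∞ := δ ^ (1/r) * U' ^ (1/q) with hDdef
  have hD0 : D ≠ 0 := by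
    refine mul_ne_zero ?_ ?_
    · exact (ENNReal.rpow_pos (pos_iff_ne_zero.2 hδ0) hδtop).ne'
    · exact (ENNReal.rpow_pos (pos_iff_ne_zero.2 hU'0) hU'top).ne'
  have hDtop : D ≠ ⊤ :=
    ENNReal.mul_ne_top (ENNReal.rpow_ne_top_of_nonneg (by positivity) hδtop)
      (ENNReal.rpow_ne_top_of_nonneg (by positivity) hU'top)
  set B : ℝ≥0∞ := M / D with hBdef
  have hBtop : B ≠ ⊤ := (ENNReal.div_lt_top hMtop hD0).ne
  set s : ℝ := 1 - 1/r with hsdef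
  have hs : 0 < s := by
    have : 1/r < 1 := (div_lt_one hr0).2 hr
    simp only [hsdef]; linarith
  have hB1_0 : B + 1 ≠ 0 := by simp
  have hB1_top : B + 1 ≠ ⊤ := ENNReal.add_ne_top.2 ⟨hBtop, ENNReal.one_ne_top⟩
  set εE : ℝ≥0∞ := (B + 1) ^ (-s⁻¹) with hεEdef
  have hεE0 : εE ≠ 0 := (ENNReal.rpow_pos (pos_iff_ne_zero.2 hB1_0) hB1_top).ne'
  have hεEtop : εE ≠ ⊤ := by
    simp only [hεEdef, ne_eq, ENNReal.rpow_eq_top_iff, not_or, not_and]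
    exact ⟨fun h => absurd h hB1_0, fun h => absurd h hB1_top⟩
  set ε' : ℝ≥0∞ := min εE 1 with hε'def
  have hε'0 : ε' ≠ 0 := by
    simp only [hε'def, ne_eq, min_eq_iff]
    rintro (⟨h1, -⟩ | ⟨h1, -⟩)
    · exact hεE0 h1
    · exact one_ne_zero h1
  have hε'top : ε' ≠ ⊤ := (lt_of_le_of_lt (min_le_right _ _) ENNReal.one_lt_top).ne
  set ε : ℝ := ε'.toReal with hεdef
  have hε : 0 < ε := ENNReal.toReal_pos hε'0 hε'top
  -- find a small piece of E with positive measure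
  have hcover : E ⊆ ⋃ j : ℕ, E ∩ Ico ((j:ℝ)*ε) ((j+1)*ε) := by
    intro t ht
    have ht0 : 0 < t := (hEsub ht).1
    refine mem_iUnion.2 ⟨⌊t/ε⌋₊, ht, ?_, ?_⟩
    · calc (⌊t/ε⌋₊ : ℝ) * ε ≤ (t/ε) * ε := by
            exact mul_le_mul_of_nonneg_right (Nat.floor_le (div_nonneg ht0.le hε.le)) hε.le
        _ = t := div_mul_cancel₀ t hε.ne'
    · calc t = (t/ε) * ε := (div_mul_cancel₀ t hε.ne').symm
        _ < ((⌊t/ε⌋₊ : ℝ) + 1) * ε :=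
            mul_lt_mul_of_pos_right (Nat.lt_floor_add_one (t/ε)) hε
  obtain ⟨j, hm0⟩ : ∃ j : ℕ, volume (E ∩ Ico ((j:ℝ)*ε) ((j+1)*ε)) ≠ 0 := by
    by_contra h
    push_neg at h
    exact hE0 (measure_mono_null hcover (measure_iUnion_null h))
  set S : Set ℝ := E ∩ Ico ((j:ℝ)*ε) ((j+1)*ε) with hSdef
  have hS : MeasurableSet S := hE.inter measurableSet_Ico
  have hSsubE : S ⊆ E := inter_subset_left
  have hSsub : S ⊆ Ioo 0 b := fun x hx => hEsub (hSsubE hx)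
  set m : ℝ≥0∞ := volume S with hmdef
  have hm_le : m ≤ ε' := by
    calc m ≤ volume (Ico ((j:ℝ)*ε) ((j+1)*ε)) := measure_mono inter_subset_right
      _ = ENNReal.ofReal (((j:ℝ)+1)*ε - (j:ℝ)*ε) := Real.volume_Ico
      _ = ENNReal.ofReal ε := by ring_nf
      _ = ε' := ENNReal.ofReal_toReal hε'top
  have hmtop : m ≠ ⊤ :=
    (hm_le.trans_lt (lt_of_le_of_lt (min_le_right _ _) ENNReal.one_lt_top)).ne
  set c : ℝ≥0∞ := m⁻¹ with hcdef
  have hc0 : c ≠ 0 := ENNReal.inv_ne_zero.2 hmtop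
  have hctop : c ≠ ⊤ := ENNReal.inv_ne_top.2 hm0
  set f : ℝ → ℝ≥0∞ := S.indicator (fun _ => c) with hfdef
  have hfmeas : Measurable f := measurable_const.indicator hS
  have key : ∀ t : ℝ, (∫⁻ x in Ioi t, f x) = c * volume (S ∩ Ioi t) := by
    intro t
    rw [hfdef, lintegral_indicator hS, setLIntegral_const, Measure.restrict_apply hS]
  -- RHS bound
  have hRHS : (∫⁻ t in Ioi (0:ℝ), (∫⁻ x in Ioi t, f x) ^ p * w t) ≤ W := by
    have hbnd : ∀ t ∈ Ioi (0:ℝ),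
        (∫⁻ x in Ioi t, f x) ^ p * w t ≤ (Ioo (0:ℝ) b).indicator w t := by
      intro t ht
      rcases lt_or_ge t b with h | h
      · rw [indicator_of_mem (show t ∈ Ioo (0:ℝ) b from ⟨ht, h⟩)]
        have h1 : (∫⁻ x in Ioi t, f x) ≤ 1 := by
          rw [key t]
          calc c * volume (S ∩ Ioi t) ≤ c * m :=
              mul_le_mul_right (measure_mono inter_subset_left) c
            _ = 1 := ENNReal.inv_mul_cancel hm0 hmtop
        calc (∫⁻ x in Ioi t, f x) ^ p * w t ≤ 1 * w t :=
            mul_le_mul_left (ENNReal.rpow_le_one h1 hp.le) _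
          _ = w t := one_mul _
      · have h2 : S ∩ Ioi t = ∅ := by
          ext x
          simp only [mem_inter_iff, mem_Ioi, mem_empty_iff_false, iff_false, not_and]
          intro hx
          exact not_lt.2 ((hSsub hx).2.le.trans h)
        rw [key t, h2, measure_empty, mul_zero, ENNReal.zero_rpow_of_pos hp, zero_mul]
        exact zero_le
    calc (∫⁻ t in Ioi (0:ℝ), (∫⁻ x in Ioi t, f x) ^ p * w t)
        ≤ ∫⁻ t in Ioi (0:ℝ), (Ioo (0:ℝ) b).indicator w t :=
          setLIntegral_mono (hw.indicator measurableSet_Ioo) hbnd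
      _ = W := by
          rw [lintegral_indicator measurableSet_Ioo, hWdef,
            Measure.restrict_restrict measurableSet_Ioo,
            inter_eq_left.2 (fun x hx => hx.1)]
  -- LHS bound
  set A : ℝ≥0∞ := c ^ r * (δ * m) with hAdef
  have hinner : ∀ t ∈ Ioi b, A ≤ ∫⁻ x in Ioo (0:ℝ) t, f x ^ r * v x := by
    intro t ht
    have hSt : S ⊆ Ioo 0 t := fun x hx => ⟨(hSsub hx).1, (hSsub hx).2.trans ht⟩
    calc A = c ^ r * δ * m := by rw [hAdef, mul_assoc]
      _ = ∫⁻ _ in S, c ^ r * δ := (setLIntegral_const S _).symm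
      _ ≤ ∫⁻ x in S, f x ^ r * v x := by
          refine setLIntegral_mono' hS (fun x hx => ?_)
          rw [hfdef, indicator_of_mem hx]
          exact mul_le_mul_right (hEδ x (hSsubE hx)) _
      _ ≤ ∫⁻ x in Ioo (0:ℝ) t, f x ^ r * v x := lintegral_mono_set hSt
  have h1 : A ^ (q/r) * U ≤
      ∫⁻ t in Ioi (0:ℝ), (∫⁻ x in Ioo (0:ℝ) t, f x ^ r * v x) ^ (q/r) * u t := by
    calc A ^ (q/r) * U = ∫⁻ t in Ioi b, A ^ (q/r) * u t := by
          rw [lintegral_const_mul _ hu]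
      _ ≤ ∫⁻ t in Ioi b, (∫⁻ x in Ioo (0:ℝ) t, f x ^ r * v x) ^ (q/r) * u t := by
          refine setLIntegral_mono' measurableSet_Ioi (fun t ht => ?_)
          exact mul_le_mul_left (ENNReal.rpow_le_rpow (hinner t ht) (by positivity)) _
      _ ≤ _ := lintegral_mono_set (Ioi_subset_Ioi hb.le)
  have hmain : A ^ (1/r) * U ^ (1/q) ≤ M := by
    have h3 : (A ^ (q/r) * U) ^ (1/q) ≤ M := by
      calc (A ^ (q/r) * U) ^ (1/q)
          ≤ (∫⁻ t in Ioi (0:ℝ),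
              (∫⁻ x in Ioo (0:ℝ) t, f x ^ r * v x) ^ (q/r) * u t) ^ (1/q) :=
            ENNReal.rpow_le_rpow h1 (by positivity)
        _ ≤ C * (∫⁻ t in Ioi (0:ℝ), (∫⁻ x in Ioi t, f x) ^ p * w t) ^ (1/p) := hineq f hfmeas
        _ ≤ M := by
            rw [hMdef]
            exact mul_le_mul_right (ENNReal.rpow_le_rpow hRHS (by positivity)) C
    have h4 : (A ^ (q/r) * U) ^ (1/q) = A ^ (1/r) * U ^ (1/q) := by
      have hexp : q / r * (1 / q) = 1 / r := by
        field_simp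
      rw [ENNReal.mul_rpow_of_nonneg _ _ (by positivity), ← ENNReal.rpow_mul, hexp]
    rwa [h4] at h3
  have hA : A ^ (1/r) = m ^ (1/r - 1) * δ ^ (1/r) := by
    have hrr : r * (1/r) = 1 := by field_simp
    rw [hAdef, ENNReal.mul_rpow_of_nonneg _ _ (by positivity),
      ENNReal.mul_rpow_of_nonneg _ _ (by positivity), ← ENNReal.rpow_mul, hrr,
      ENNReal.rpow_one, sub_eq_add_neg, ENNReal.rpow_add _ _ hm0 hmtop,
      ENNReal.rpow_neg_one, hcdef]
    ring
  have h5 : m ^ (1/r - 1) * D ≤ M := by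
    calc m ^ (1/r - 1) * D = m ^ (1/r - 1) * δ ^ (1/r) * U' ^ (1/q) := by
          rw [hDdef, mul_assoc]
      _ ≤ m ^ (1/r - 1) * δ ^ (1/r) * U ^ (1/q) :=
          mul_le_mul_right (ENNReal.rpow_le_rpow (min_le_left _ _) (by positivity)) _
      _ = A ^ (1/r) * U ^ (1/q) := by rw [hA]
      _ ≤ M := hmain
  have h6 : m ^ (1/r - 1) ≤ B := by
    rw [hBdef]
    exact (ENNReal.le_div_iff_mul_le (Or.inl hD0) (Or.inl hDtop)).2 h5
  have h7 : B + 1 ≤ m ^ (1/r - 1) := by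
    have hms : m ≤ εE := hm_le.trans (min_le_left _ _)
    have hex : 1/r - 1 = -s := by rw [hsdef]; ring
    have hεEs : εE ^ (-s) = B + 1 := by
      rw [hεEdef, ← ENNReal.rpow_mul]
      have : -s⁻¹ * -s = 1 := by field_simp
      rw [this, ENNReal.rpow_one]
    calc B + 1 = εE ^ (-s) := hεEs.symm
      _ ≤ m ^ (-s) := by
          rw [ENNReal.rpow_neg, ENNReal.rpow_neg]
          exact ENNReal.inv_le_inv' (ENNReal.rpow_le_rpow hms hs.le)
      _ = m ^ (1/r - 1) := by rw [hex]
  exact absurd (h7.trans h6) (not_le.2 (ENNReal.lt_add_right hBtop one_ne_zero))
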